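/- Let U₀ = A ∈ GL(n,ℝ) and define the Newton iteration U_{k+1} = (1/2)(U_k + U_k^{-T}). If A = UP is the polar decomposition of A, then each U_k has the same orthogonal polar factor U, i.e., U_k = U P_k for some symmetric positive-definite P_k, where P_{k+1} = (1/2)(P_k + P_k^{-1}) and P₀ = P. -/

import Mathlib

open Matrix


private lemma posDef_smul_aux {n : ℕ} {M : Matrix (Fin n) (Fin n) ℝ} (hM : M.PosDef)
    {c : ℝ} (hc : 0 < c) : (c • M).PosDef := by
  refine ⟨?_, fun x hx => ?_⟩
  · unfold Matrix.IsHermitian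
    rw [Matrix.conjTranspose_smul, hM.1.eq]
    simp
  · have h := mul_pos hc (hM.2 hx)
    convert h using 1
    simp only [Finsupp.sum, Finset.mul_sum, Matrix.smul_apply, smul_eq_mul]
    refine Finset.sum_congr rfl fun i _ => Finset.sum_congr rfl fun j _ => ?_
    ring

theorem newton_iteration_polar_factor (n : ℕ)
    (A U P : Matrix (Fin n) (Fin n) ℝ) (hA : IsUnit A)
    (hU : Uᵀ * U = 1) (hP : P.PosDef) (hpolar : A = U * P)
    (Useq : ℕ → Matrix (Fin n) (Fin n) ℝ)
    (hU0 : Useq 0 = A)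
    (hUstep : ∀ k, Useq (k + 1) = (1 / 2 : ℝ) • (Useq k + ((Useq k)⁻¹)ᵀ)) :
    ∃ Pseq : ℕ → Matrix (Fin n) (Fin n) ℝ,
      Pseq 0 = P ∧
      (∀ k, (Pseq k).PosDef) ∧
      (∀ k, Useq k = U * Pseq k) ∧
      ∀ k, Pseq (k + 1) = (1 / 2 : ℝ) • (Pseq k + (Pseq k)⁻¹) := by
  set Pseq : ℕ → Matrix (Fin n) (Fin n) ℝ :=
    fun k => Nat.rec P (fun _ Q => (1 / 2 : ℝ) • (Q + Q⁻¹)) k with hPseq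
  have h0 : Pseq 0 = P := rfl
  have hstep : ∀ k, Pseq (k + 1) = (1 / 2 : ℝ) • (Pseq k + (Pseq k)⁻¹) :=
    fun k => rfl
  have hpos : ∀ k, (Pseq k).PosDef := by
    intro k
    induction k with
    | zero => exact hP
    | succ k ih =>
      rw [hstep]
      exact posDef_smul_aux (ih.add ih.inv) (by norm_num)
  have hUinv : U⁻¹ = Uᵀ := inv_eq_left_inv hU
  have hmain : ∀ k, Useq k = U * Pseq k := by
    intro k
    induction k with
    | zero => rw [hU0, hpolar]; rfl
    | succ k ih =>
      have hQ := hpos k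
      have hQsym : (Pseq k)ᵀ = Pseq k := hQ.isHermitian.eq
      have hQunit : IsUnit (Pseq k).det := isUnit_iff_ne_zero.mpr (ne_of_gt hQ.det_pos)
      have hUunit : IsUnit U.det := by
        have := congrArg Matrix.det hU
        rw [Matrix.det_mul, Matrix.det_transpose, Matrix.det_one] at this
        exact IsUnit.of_mul_eq_one _ (by nlinarith [this])
      have hinv : ((Useq k)⁻¹)ᵀ = U * (Pseq k)⁻¹ := by
        rw [ih, Matrix.mul_inv_rev, Matrix.transpose_mul, Matrix.transpose_nonsing_inv,
          Matrix.transpose_nonsing_inv, hQsym, ← hUinv,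
          Matrix.nonsing_inv_nonsing_inv _ hUunit]
      rw [hUstep, hinv, ih, hstep, Matrix.mul_smul, Matrix.mul_add]
  exact ⟨Pseq, h0, hpos, hmain, hstep⟩
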